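/- (Lemma 1 of the paper) Let 𝒫 ⊆ [-π, π] be measurable with measure μ(𝒫), and let ℱ = {f_1, ..., f_N} be a set of N unit-norm vectors in ℂ^M. Define χ(ℱ) = min_{ψ ∈ 𝒫} max_{1 ≤ i ≤ N} |f_i* a(ψ)|², where a(ψ) = (1, e^{iψ}, ..., e^{i(M-1)ψ})^T. Then χ(ℱ) ≤ min( 2πN / μ(𝒫), M ). -/

import Mathlib

open Real Complex Finset MeasureTheory
open intervalIntegral


lemma exp_orth (n : ℤ) : (∫ ψ : ℝ in (-π)..π, Complex.exp (Complex.I * n * ψ)) =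
    if n = 0 then (2 * π : ℂ) else 0 := by
  rcases eq_or_ne n 0 with h | h
  · rw [if_pos h]
    simp only [h, Int.cast_zero, mul_zero, zero_mul, Complex.exp_zero]
    rw [intervalIntegral.integral_const]
    rw [Complex.real_smul]
    push_cast
    ring
  · rw [if_neg h]
    have hc : (Complex.I * n : ℂ) ≠ 0 := by
      simp [Complex.I_ne_zero, Complex.ext_iff, h]
    have := integral_exp_mul_complex (a := -π) (b := π) hc
    rw [show (fun x : ℝ => Complex.exp (Complex.I * n * x)) = fun x : ℝ => Complex.exp ((Complex.I * n) * x) from rfl, this]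
    have h1 : Complex.exp (Complex.I * n * π) = (-1 : ℂ) ^ n := by
      rw [show (Complex.I * n * π : ℂ) = n * (π * Complex.I) by push_cast; ring,
        Complex.exp_int_mul, Complex.exp_pi_mul_I]
    have h2 : Complex.exp (Complex.I * n * (-π : ℝ)) = (-1 : ℂ) ^ n := by
      rw [show (Complex.I * n * ((-π : ℝ) : ℂ) : ℂ) = ((-n : ℤ) : ℂ) * (π * Complex.I) by push_cast; ring,
        Complex.exp_int_mul, Complex.exp_pi_mul_I]
      rw [zpow_neg]
      rcases Int.even_or_odd n with he | ho
      · rw [he.neg_one_zpow]; norm_num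
      · rw [ho.neg_one_zpow]; norm_num
    rw [h1, h2, sub_self, zero_div]

lemma parseval (M : ℕ) (f : Fin M → ℂ) :
    (∫ ψ : ℝ in (-π)..π, ‖∑ m : Fin M,
      (starRingEnd ℂ) (f m) * Complex.exp (Complex.I * (m : ℕ) * (ψ : ℂ))‖ ^ 2)
    = 2 * π * ∑ m : Fin M, ‖f m‖ ^ 2 := by
  set S : ℝ → ℂ := fun ψ => ∑ m : Fin M,
      (starRingEnd ℂ) (f m) * Complex.exp (Complex.I * (m : ℕ) * (ψ : ℂ)) with hS
  have hScont : Continuous S := by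
    apply continuous_finset_sum
    intro m _
    fun_prop
  have hexpand : ∀ ψ : ℝ, S ψ * (starRingEnd ℂ) (S ψ) =
      ∑ m : Fin M, ∑ k : Fin M, ((starRingEnd ℂ) (f m) * f k) *
        Complex.exp (Complex.I * ((((m : ℕ) : ℤ) - ((k : ℕ) : ℤ) : ℤ) : ℂ) * (ψ : ℂ)) := by
    intro ψ
    rw [hS, map_sum, Finset.sum_mul_sum]
    refine Finset.sum_congr rfl fun m _ => Finset.sum_congr rfl fun k _ => ?_
    rw [map_mul, RingHomCompTriple.comp_apply, RingHom.id_apply, ← Complex.exp_conj]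
    rw [show (starRingEnd ℂ) (Complex.I * (k : ℕ) * (ψ : ℂ)) =
      -(Complex.I * (k : ℕ) * (ψ : ℂ)) by simp [Complex.ext_iff]]
    rw [mul_mul_mul_comm, ← Complex.exp_add]
    congr 1
    push_cast
    ring
  have hcomplex : (∫ ψ : ℝ in (-π)..π, S ψ * (starRingEnd ℂ) (S ψ))
      = ((2 * π * ∑ m : Fin M, ‖f m‖ ^ 2 : ℝ) : ℂ) := by
    calc (∫ ψ : ℝ in (-π)..π, S ψ * (starRingEnd ℂ) (S ψ))
        = ∫ ψ : ℝ in (-π)..π, ∑ m : Fin M, ∑ k : Fin M, ((starRingEnd ℂ) (f m) * f k) *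
          Complex.exp (Complex.I * ((((m : ℕ) : ℤ) - ((k : ℕ) : ℤ) : ℤ) : ℂ) * (ψ : ℂ)) := by
          simp_rw [hexpand]
      _ = ∑ m : Fin M, ∑ k : Fin M, ((starRingEnd ℂ) (f m) * f k) *
          ∫ ψ : ℝ in (-π)..π,
            Complex.exp (Complex.I * ((((m : ℕ) : ℤ) - ((k : ℕ) : ℤ) : ℤ) : ℂ) * (ψ : ℂ)) := by
          rw [intervalIntegral.integral_finset_sum]
          · refine Finset.sum_congr rfl fun m _ => ?_
            rw [intervalIntegral.integral_finset_sum]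
            · exact Finset.sum_congr rfl fun k _ => intervalIntegral.integral_const_mul _ _
            · intro k _
              apply Continuous.intervalIntegrable
              fun_prop
          · intro m _
            apply Continuous.intervalIntegrable
            apply continuous_finset_sum
            intro k _
            fun_prop
      _ = ∑ m : Fin M, ∑ k : Fin M, ((starRingEnd ℂ) (f m) * f k) *
          (if ((m : ℕ) : ℤ) - ((k : ℕ) : ℤ) = 0 then (2 * π : ℂ) else 0) := by
          simp_rw [exp_orth]
      _ = ((2 * π * ∑ m : Fin M, ‖f m‖ ^ 2 : ℝ) : ℂ) := by
          have : ∀ m k : Fin M, (((m : ℕ) : ℤ) - ((k : ℕ) : ℤ) = 0) = (k = m) := by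
            intro m k
            simp [sub_eq_zero, Fin.ext_iff, eq_comm]
          simp only [this, mul_ite, mul_zero, Finset.sum_ite_eq', Finset.mem_univ, if_true]
          push_cast
          rw [Finset.mul_sum]
          refine Finset.sum_congr rfl fun m _ => ?_
          rw [← Complex.normSq_eq_conj_mul_self, ← Complex.sq_norm]
          push_cast
          ring
  have habs : ∀ ψ : ℝ, ‖S ψ‖ ^ 2 = (S ψ * (starRingEnd ℂ) (S ψ)).re := by
    intro ψ
    rw [Complex.mul_conj, Complex.sq_norm]
    simp
  calc (∫ ψ : ℝ in (-π)..π, ‖S ψ‖ ^ 2)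
      = ∫ ψ : ℝ in (-π)..π, Complex.reCLM (S ψ * (starRingEnd ℂ) (S ψ)) := by
        simp_rw [habs]; rfl
    _ = Complex.reCLM (∫ ψ : ℝ in (-π)..π, S ψ * (starRingEnd ℂ) (S ψ)) := by
        rw [ContinuousLinearMap.intervalIntegral_comp_comm]
        exact (hScont.mul (Complex.continuous_conj.comp hScont)).intervalIntegrable _ _
    _ = 2 * π * ∑ m : Fin M, ‖f m‖ ^ 2 := by
        rw [hcomplex]; exact Complex.ofReal_re _

/-- Lemma 1: the covering-distance inner product of a size-`N` codebook of unit-norm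
beamformers over an angle set `P` is at most `min (2πN/μ(P)) M`. -/
theorem covering_metric_bound (M N : ℕ) (hN : 0 < N)
    (F : Fin N → (Fin M → ℂ))
    (hF : ∀ i, ∑ m : Fin M, ‖F i m‖ ^ 2 = 1)
    (P : Set ℝ) (hPsub : P ⊆ Set.Icc (-π) π) (hPm : MeasurableSet P)
    (hPpos : 0 < volume P) :
    sInf ((fun ψ : ℝ => ⨆ i : Fin N, ‖∑ m : Fin M,
        (starRingEnd ℂ) (F i m) * Complex.exp (Complex.I * (m : ℕ) * (ψ : ℂ))‖ ^ 2) '' P)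
      ≤ min (2 * π * N / (volume P).toReal) M := by
  haveI : Nonempty (Fin N) := Fin.pos_iff_nonempty.mp hN
  set g : Fin N → ℝ → ℝ := fun i ψ => ‖∑ m : Fin M,
      (starRingEnd ℂ) (F i m) * Complex.exp (Complex.I * (m : ℕ) * (ψ : ℂ))‖ ^ 2 with hg
  set h : ℝ → ℝ := fun ψ => ⨆ i : Fin N, g i ψ with hh
  have hgcont : ∀ i, Continuous (g i) := by
    intro i
    apply Continuous.pow
    apply continuous_norm.comp
    apply continuous_finset_sum
    intro m _
    fun_prop
  have hgnonneg : ∀ i ψ, 0 ≤ g i ψ := fun i ψ => by positivity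
  have hbdd : ∀ ψ, BddAbove (Set.range fun i => g i ψ) :=
    fun ψ => (Set.finite_range _).bddAbove
  have hgM : ∀ i ψ, g i ψ ≤ M := by
    intro i ψ
    have h1 : ‖∑ m : Fin M,
        (starRingEnd ℂ) (F i m) * Complex.exp (Complex.I * (m : ℕ) * (ψ : ℂ))‖
        ≤ ∑ m : Fin M, ‖F i m‖ := by
      refine le_trans (norm_sum_le _ _) (le_of_eq ?_)
      refine Finset.sum_congr rfl fun m _ => ?_
      rw [norm_mul, Complex.norm_exp]
      simp [Complex.norm_conj]
    have h2 : (∑ m : Fin M, ‖F i m‖) ^ 2 ≤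
        (M : ℝ) * ∑ m : Fin M, ‖F i m‖ ^ 2 := by
      simpa using sq_sum_le_card_mul_sum_sq
        (s := (Finset.univ : Finset (Fin M))) (f := fun m => ‖F i m‖)
    calc g i ψ ≤ (∑ m : Fin M, ‖F i m‖) ^ 2 := by
          exact pow_le_pow_left₀ (by positivity) h1 2
      _ ≤ (M : ℝ) * ∑ m : Fin M, ‖F i m‖ ^ 2 := h2
      _ = M := by rw [hF i, mul_one]
  have hPne : P.Nonempty := MeasureTheory.nonempty_of_measure_ne_zero hPpos.ne'
  obtain ⟨ψ₀, hψ₀⟩ := hPne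
  have hSne : (h '' P).Nonempty := ⟨h ψ₀, ψ₀, hψ₀, rfl⟩
  have hSbdd : BddBelow (h '' P) := by
    refine ⟨0, fun x hx => ?_⟩
    obtain ⟨ψ, _, rfl⟩ := hx
    exact le_ciSup_of_le (hbdd ψ) (Classical.arbitrary _) (hgnonneg _ ψ)
  have hIccfin : volume (Set.Icc (-π) π) ≠ ⊤ := by
    rw [Real.volume_Icc]; exact ENNReal.ofReal_ne_top
  have hPfin : volume P ≠ ⊤ := fun hc =>
    hIccfin (top_le_iff.mp (hc ▸ measure_mono hPsub))
  have hμr : 0 < (volume P).toReal := ENNReal.toReal_pos hPpos.ne' hPfin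
  -- the integral of each g i over Icc is 2π
  have hint : ∀ i, ∫ ψ in Set.Icc (-π) π, g i ψ = 2 * π := by
    intro i
    rw [MeasureTheory.integral_Icc_eq_integral_Ioc,
      ← intervalIntegral.integral_of_le (by linarith [Real.pi_pos] : -π ≤ π)]
    rw [hg]
    simp only
    rw [parseval M (F i), hF i, mul_one]
  refine le_min ?_ ?_
  · -- bound by 2πN/μ
    by_contra hlt
    push_neg at hlt
    set s := sInf (h '' P) with hs
    set T : Fin N → Set ℝ := fun i => P ∩ {ψ | s ≤ g i ψ} with hT
    have hTm : ∀ i, MeasurableSet (T i) :=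
      fun i => hPm.inter (measurableSet_le measurable_const (hgcont i).measurable)
    have hTsub : ∀ i, T i ⊆ Set.Icc (-π) π := fun i =>
      (Set.inter_subset_left).trans hPsub
    have hTfin : ∀ i, volume (T i) ≠ ⊤ := fun i => fun hc =>
      hIccfin (top_le_iff.mp (hc ▸ measure_mono (hTsub i)))
    have hcover : P ⊆ ⋃ i, T i := by
      intro ψ hψ
      have hsle : s ≤ h ψ := csInf_le hSbdd ⟨ψ, hψ, rfl⟩
      obtain ⟨i, hi⟩ := Finite.exists_max (fun i => g i ψ)
      have : h ψ ≤ g i ψ := ciSup_le hi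
      exact Set.mem_iUnion.mpr ⟨i, hψ, le_trans hsle this⟩
    have hmeas : volume P ≤ ∑ i : Fin N, volume (T i) :=
      le_trans (measure_mono hcover) (measure_iUnion_fintype_le _ _)
    have hIntOn : ∀ i, IntegrableOn (g i) (Set.Icc (-π) π) volume :=
      fun i => (hgcont i).integrableOn_Icc
    have hkey : ∀ i, s * (volume (T i)).toReal ≤ 2 * π := by
      intro i
      calc s * (volume (T i)).toReal ≤ ∫ ψ in T i, g i ψ := by
            refine setIntegral_ge_of_const_le_real (hTm i) (hTfin i) (fun x hx => hx.2) ?_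
            exact (hIntOn i).mono_set (hTsub i)
        _ ≤ ∫ ψ in Set.Icc (-π) π, g i ψ := by
            refine setIntegral_mono_set (hIntOn i) ?_ ((hTsub i).eventuallyLE)
            exact Filter.Eventually.of_forall fun x => hgnonneg i x
        _ = 2 * π := hint i
    have hs0 : 0 ≤ s := le_csInf hSne fun x hx => by
      obtain ⟨ψ, _, rfl⟩ := hx
      exact le_ciSup_of_le (hbdd ψ) (Classical.arbitrary _) (hgnonneg _ ψ)
    have hsum : s * (volume P).toReal ≤ N * (2 * π) := by
      calc s * (volume P).toReal ≤ s * (∑ i : Fin N, volume (T i)).toReal := by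
            refine mul_le_mul_of_nonneg_left ?_ hs0
            refine ENNReal.toReal_le_toReal hPfin ?_ |>.mpr hmeas
            exact ENNReal.sum_ne_top.mpr fun i _ => hTfin i
        _ = ∑ i : Fin N, s * (volume (T i)).toReal := by
            rw [ENNReal.toReal_sum fun i _ => hTfin i, Finset.mul_sum]
        _ ≤ ∑ i : Fin N, (2 * π) := Finset.sum_le_sum fun i _ => hkey i
        _ = N * (2 * π) := by rw [Finset.sum_const, Finset.card_univ,
            Fintype.card_fin, nsmul_eq_mul]
    have : s ≤ 2 * π * N / (volume P).toReal := by
      rw [le_div_iff₀ hμr]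
      linarith [hsum]
    exact absurd this (not_le.mpr hlt)
  · -- bound by M
    refine le_trans (csInf_le hSbdd ⟨ψ₀, hψ₀, rfl⟩) ?_
    exact ciSup_le fun i => hgM i ψ₀
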